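/- For a nonregular filtration, the good part g = qfq + ∑_j E_{j−1}(p_j f p_j) of the Calderón–Zygmund decomposition at height λ satisfies ‖g‖₂² ≤ 6λ‖f‖₁. In particular, one has the identity E_{j−1}(p_j f p_j) = q_{j−1}E_{j−1}(f)q_{j−1} − E_{j−1}(q_j E_j(f) q_j), the telescoping bound ‖∑_j (q_j E_j(f) q_j − q_{j−1}E_{j−1}(f)q_{j−1})‖₂² ≤ λ‖f‖₁, and the martingale-difference bound ∑_j ‖q_j E_j(f)q_j − E_{j−1}(q_j E_j(f) q_j)‖₂² ≤ 2λ‖f‖₁. -/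

import Mathlib

open Matrix
open scoped ComplexOrder

/-- The positive semidefinite square root of a positive semidefinite matrix
(removed from Mathlib; restored with its former definition). -/
noncomputable def Matrix.PosSemidef.sqrt {n 𝕜 : Type*} [Fintype n] [RCLike 𝕜] [DecidableEq n]
    {A : Matrix n n 𝕜} (hA : A.PosSemidef) : Matrix n n 𝕜 :=
  (hA.1.eigenvectorUnitary : Matrix n n 𝕜) *
    diagonal (fun i => ((Real.sqrt (hA.1.eigenvalues i) : ℝ) : 𝕜)) *
    (star hA.1.eigenvectorUnitary : Matrix n n 𝕜)

/-- The trace norm `‖A‖₁ = tr √(AᴴA)` of a complex matrix. -/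
noncomputable def traceNorm {m : ℕ} (A : Matrix (Fin m) (Fin m) ℂ) : ℝ :=
  ((Matrix.posSemidef_conjTranspose_mul_self A).sqrt.trace).re

/-- The squared Hilbert–Schmidt (L₂) norm `‖A‖₂² = tr(AᴴA)`. -/
noncomputable def frobSq {m : ℕ} (A : Matrix (Fin m) (Fin m) ℂ) : ℝ :=
  ((Aᴴ * A).trace).re

/-- Trace of a positive semidefinite matrix is nonnegative (in the complex order). -/
lemma czh_psd_trace_nonneg {n : ℕ} {A : Matrix (Fin n) (Fin n) ℂ} (hA : A.PosSemidef) :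
    0 ≤ A.trace := by
  exact hA.trace_nonneg

/-- The trace of a product of two positive semidefinite matrices is nonnegative. -/
lemma czh_psd_trace_mul_nonneg {n : ℕ} {A B : Matrix (Fin n) (Fin n) ℂ}
    (hA : A.PosSemidef) (hB : B.PosSemidef) : 0 ≤ (A * B).trace := by
  obtain ⟨C, rfl⟩ : ∃ C, A = star C * C := by
    open scoped MatrixOrder in
    exact CStarAlgebra.nonneg_iff_eq_star_mul_self.mp (Matrix.nonneg_iff_posSemidef.mpr hA)
  rw [Matrix.mul_assoc, Matrix.trace_mul_comm]
  exact czh_psd_trace_nonneg (hB.mul_mul_conjTranspose_same C)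

/-- Monotonicity of `B ↦ tr(A B)` for `A` positive semidefinite. -/
lemma czh_psd_trace_mul_mono {n : ℕ} {A B C : Matrix (Fin n) (Fin n) ℂ}
    (hA : A.PosSemidef) (hBC : (C - B).PosSemidef) : (A * B).trace ≤ (A * C).trace := by
  have h := czh_psd_trace_mul_nonneg hA hBC
  rw [Matrix.mul_sub, Matrix.trace_sub] at h
  exact sub_nonneg.mp h

/-- A nonnegative real multiple of a PSD matrix is PSD. -/
lemma czh_psd_smul {n : ℕ} {A : Matrix (Fin n) (Fin n) ℂ} (hA : A.PosSemidef) {c : ℝ}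
    (hc : 0 ≤ c) : ((c : ℂ) • A).PosSemidef := by
  constructor
  · unfold Matrix.IsHermitian
    rw [Matrix.conjTranspose_smul, hA.1]
    congr 1
    simp [Complex.ext_iff]
  · intro v
    exact (hA.smul (a := (c : ℂ)) (by exact_mod_cast hc)).2 v

/-- For `A` positive semidefinite, `√(AᴴA) = A`. -/
lemma czh_sqrt_eq {n : ℕ} (A : Matrix (Fin n) (Fin n) ℂ) (hA : A.PosSemidef) :
    (Matrix.posSemidef_conjTranspose_mul_self A).sqrt = A := by
  open scoped MatrixOrder in
  have h1 : (Matrix.posSemidef_conjTranspose_mul_self A).sqrt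
      = cfc Real.sqrt (Aᴴ * A) := by
    rw [(Matrix.posSemidef_conjTranspose_mul_self A).1.cfc_eq]
    rfl
  open scoped MatrixOrder in
  have h2 : cfc Real.sqrt (Aᴴ * A) = A := by
    have hA0 : 0 ≤ A := Matrix.nonneg_iff_posSemidef.mpr hA
    rw [hA.1, ← cfcₙ_eq_cfc, ← CFC.sqrt_eq_real_sqrt (A * A), CFC.sqrt_mul_self A]
  rw [h1, h2]

/-- For a (possibly nonregular) filtration, the good part
`g = qfq + ∑_j E_{j-1}(p_j f p_j)` of the Calderón–Zygmund decomposition at height `λ`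
satisfies `‖g‖₂² ≤ 6λ‖f‖₁`.  Moreover `E_{j-1}(p_j f p_j) = q_{j-1}E_{j-1}(f)q_{j-1} -
E_{j-1}(q_j E_j(f) q_j)`, the telescoping bound
`‖∑_j (q_j E_j(f) q_j - q_{j-1}E_{j-1}(f)q_{j-1})‖₂² ≤ λ‖f‖₁` holds, and
`∑_j ‖q_j E_j(f)q_j - E_{j-1}(q_j E_j(f) q_j)‖₂² ≤ 2λ‖f‖₁`. -/
theorem cz_good_part_nonregular {m : ℕ}
    (E : ℕ → Matrix (Fin m) (Fin m) ℂ →ₗ[ℂ] Matrix (Fin m) (Fin m) ℂ)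
    (hidem : ∀ j, (E j).comp (E j) = E j)
    (htower : ∀ j k, (E j).comp (E k) = E (min j k))
    (hpos : ∀ j x, x.PosSemidef → (E j x).PosSemidef)
    (htr : ∀ j x, (E j x).trace = x.trace)
    (hbimod : ∀ j (a b x : Matrix (Fin m) (Fin m) ℂ),
        E j a = a → E j b = b → E j (a * x * b) = a * E j x * b)
    (f : Matrix (Fin m) (Fin m) ℂ) (hf : f.PosSemidef)
    (lam : ℝ) (hlam : 0 < lam)
    (q : ℕ → Matrix (Fin m) (Fin m) ℂ)
    (hq0 : q 0 = 1)
    (hqmem : ∀ j, E j (q j) = q j)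
    (hqproj : ∀ j, (q j)ᴴ = q j ∧ q j * q j = q j)
    (hqdec : ∀ j, q (j + 1) * q j = q (j + 1) ∧ q j * q (j + 1) = q (j + 1))
    (hqlevel : ∀ j, ((lam : ℂ) • q j - q j * E j f * q j).PosSemidef)
    (hqcomm : ∀ j,
        q (j + 1) * (q j * E (j + 1) f * q j) = (q j * E (j + 1) f * q j) * q (j + 1))
    (N : ℕ) (hstab : ∀ j, N ≤ j → q j = q N)
    (hqf : ((lam : ℂ) • q N - q N * f * q N).PosSemidef) :
    (∀ j : ℕ,
        E j ((q j - q (j + 1)) * f * (q j - q (j + 1)))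
          = q j * E j f * q j - E j (q (j + 1) * E (j + 1) f * q (j + 1))) ∧
    frobSq (∑ j ∈ Finset.range N,
        (q (j + 1) * E (j + 1) f * q (j + 1) - q j * E j f * q j))
      ≤ lam * traceNorm f ∧
    (∑ j ∈ Finset.range N,
        frobSq (q (j + 1) * E (j + 1) f * q (j + 1)
          - E j (q (j + 1) * E (j + 1) f * q (j + 1))))
      ≤ 2 * lam * traceNorm f ∧
    frobSq (q N * f * q N
        + ∑ j ∈ Finset.range N, E j ((q j - q (j + 1)) * f * (q j - q (j + 1))))
      ≤ 6 * lam * traceNorm f := by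
  -- shorthand definitions
  obtain ⟨x, hxd⟩ : ∃ x : ℕ → Matrix (Fin m) (Fin m) ℂ,
      x = fun j => q j * E j f * q j := ⟨_, rfl⟩
  obtain ⟨y, hyd⟩ : ∃ y : ℕ → Matrix (Fin m) (Fin m) ℂ,
      y = fun j => q j * E (j+1) f * q j := ⟨_, rfl⟩
  have hxj : ∀ j, x j = q j * E j f * q j := fun j => by rw [hxd]
  have hyj : ∀ j, y j = q j * E (j+1) f * q j := fun j => by rw [hyd]
  obtain ⟨r, hrj⟩ : ∃ r : ℕ → Matrix (Fin m) (Fin m) ℂ,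
      ∀ j, r j = y j - y j * q (j+1) := ⟨_, fun _ => rfl⟩
  obtain ⟨b, hbj⟩ : ∃ b : ℕ → Matrix (Fin m) (Fin m) ℂ,
      ∀ j, b j = x (j+1) - E j (x (j+1)) := ⟨_, fun _ => rfl⟩
  -- basic projection facts
  have hqH : ∀ j, (q j)ᴴ = q j := fun j => (hqproj j).1
  have hqq : ∀ j, q j * q j = q j := fun j => (hqproj j).2
  have heq : ∀ j, q (j+1) * q j = q (j+1) := fun j => (hqdec j).1
  have hqe : ∀ j, q j * q (j+1) = q (j+1) := fun j => (hqdec j).2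
  -- basic conditional expectation facts
  have hE1 : E 0 (1 : Matrix (Fin m) (Fin m) ℂ) = 1 := by rw [← hq0]; exact hqmem 0
  have hEone : ∀ j, E j (1 : Matrix (Fin m) (Fin m) ℂ) = 1 := by
    intro j
    have h := LinearMap.congr_fun (htower j 0) (1 : Matrix (Fin m) (Fin m) ℂ)
    simp only [LinearMap.comp_apply, Nat.min_zero] at h
    rw [hE1] at h
    exact h
  have hmono : ∀ {i j : ℕ}, i ≤ j → ∀ a : Matrix (Fin m) (Fin m) ℂ, E i a = a → E j a = a := by
    intro i j hij a ha
    have h := LinearMap.congr_fun (htower j i) a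
    simp only [LinearMap.comp_apply, min_eq_right hij] at h
    rwa [ha] at h
  have hidem' : ∀ j a, E j (E j a) = E j a := by
    intro j a
    have h := LinearMap.congr_fun (hidem j) a
    simpa using h
  have htow : ∀ j a, E j (E (j+1) a) = E j a := by
    intro j a
    have h := LinearMap.congr_fun (htower j (j+1)) a
    simpa only [LinearMap.comp_apply, min_eq_left (Nat.le_succ j)] using h
  have hleft : ∀ j (a c : Matrix (Fin m) (Fin m) ℂ), E j a = a →
      E j (a * c) = a * E j c := by
    intro j a c ha
    have h := hbimod j a 1 c ha (hEone j)
    simpa using h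
  have hright : ∀ j (a c : Matrix (Fin m) (Fin m) ℂ), E j a = a →
      E j (c * a) = E j c * a := by
    intro j a c ha
    have h := hbimod j 1 a c (hEone j) ha
    simpa using h
  have hqmemle : ∀ {i j : ℕ}, i ≤ j → E j (q i) = q i := fun {i j} h => hmono h _ (hqmem i)
  -- positivity facts
  have hsand : ∀ (a g : Matrix (Fin m) (Fin m) ℂ), aᴴ = a → g.PosSemidef →
      (a * g * a).PosSemidef := by
    intro a g hah hg
    have h := hg.mul_mul_conjTranspose_same a
    rwa [hah] at h
  have hxpsd : ∀ j, (x j).PosSemidef := by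
    intro j; rw [hxj]; exact hsand _ _ (hqH j) (hpos j f hf)
  have hypsd : ∀ j, (y j).PosSemidef := by
    intro j; rw [hyj]; exact hsand _ _ (hqH j) (hpos (j+1) f hf)
  have hqpsd : ∀ j, (q j).PosSemidef := by
    intro j
    have h : q j = (q j)ᴴ * q j := by rw [hqH, hqq]
    rw [h]; exact posSemidef_conjTranspose_mul_self _
  have hq1psd : ∀ j, ((1 : Matrix (Fin m) (Fin m) ℂ) - q j).PosSemidef := by
    intro j
    have h : (1 : Matrix (Fin m) (Fin m) ℂ) - q j = (1 - q j)ᴴ * (1 - q j) := by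
      rw [Matrix.conjTranspose_sub, Matrix.conjTranspose_one, hqH,
          Matrix.mul_sub, Matrix.mul_one, Matrix.sub_mul, Matrix.one_mul, hqq]
      abel
    rw [h]; exact posSemidef_conjTranspose_mul_self _
  -- measurability facts
  have hxmeas : ∀ j, E j (x j) = x j := by
    intro j
    rw [hxj, hbimod j (q j) (q j) (E j f) (hqmem j) (hqmem j), hidem']
  have hxmeasle : ∀ {i j : ℕ}, i ≤ j → E j (x i) = x i := fun {i j} h => hmono h _ (hxmeas i)
  have hEy : ∀ j, E j (y j) = x j := by
    intro j
    rw [hyj, hxj, hbimod j (q j) (q j) (E (j+1) f) (hqmem j) (hqmem j), htow]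
  -- the key matrix identity x (j+1) = y j * q (j+1)
  have hxy : ∀ j, x (j+1) = y j * q (j+1) := by
    intro j
    rw [hxj, hyj]
    have h1 : q (j+1) * (q j * E (j+1) f * q j) * q (j+1)
        = q (j+1) * E (j+1) f * q (j+1) := by
      calc q (j+1) * (q j * E (j+1) f * q j) * q (j+1)
          = (q (j+1) * q j) * E (j+1) f * (q j * q (j+1)) := by
            simp only [Matrix.mul_assoc]
        _ = q (j+1) * E (j+1) f * q (j+1) := by rw [heq j, hqe j]
    calc q (j+1) * E (j+1) f * q (j+1)
        = q (j+1) * (q j * E (j+1) f * q j) * q (j+1) := h1.symm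
      _ = (q j * E (j+1) f * q j) * q (j+1) * q (j+1) := by rw [hqcomm j]
      _ = (q j * E (j+1) f * q j) * q (j+1) := by rw [Matrix.mul_assoc, hqq (j+1)]
  have hxyr : ∀ j, x (j+1) = y j - r j := by
    intro j
    rw [hxy j, hrj, sub_sub_cancel]
  -- conditional expectation of x (j+1) at level j
  have hExs : ∀ j, E j (x (j+1)) = x j - E j (r j) := by
    intro j
    rw [hxyr j, map_sub, hEy]
  -- r j is positive semidefinite
  have hcomm1 : ∀ j, ((1 : Matrix (Fin m) (Fin m) ℂ) - q (j+1)) * y j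
      = y j * (1 - q (j+1)) := by
    intro j
    rw [Matrix.sub_mul, Matrix.mul_sub, Matrix.one_mul, Matrix.mul_one, hyj, hqcomm j]
  have hrpsd : ∀ j, (r j).PosSemidef := by
    intro j
    have hproj : ((1 : Matrix (Fin m) (Fin m) ℂ) - q (j+1)) * (1 - q (j+1))
        = (1 - q (j+1)) := by
      rw [Matrix.mul_sub, Matrix.mul_one, Matrix.sub_mul, Matrix.one_mul, hqq]
      abel
    have hher : ((1 : Matrix (Fin m) (Fin m) ℂ) - q (j+1))ᴴ = (1 - q (j+1)) := by
      rw [Matrix.conjTranspose_sub, Matrix.conjTranspose_one, hqH]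
    have h2 : r j = (1 - q (j+1)) * y j * (1 - q (j+1)) := by
      rw [hrj, hcomm1 j, Matrix.mul_assoc, hproj, Matrix.mul_sub, Matrix.mul_one]
    rw [h2]
    exact hsand _ _ hher (hypsd j)
  -- trace identities
  have htrE : ∀ j (a c : Matrix (Fin m) (Fin m) ℂ), E j a = a →
      (E j c * a).trace = (c * a).trace := by
    intro j a c ha
    rw [← hright j a c ha, htr]
  have htrx : ∀ j, (x j).trace = (f * q j).trace := by
    intro j
    rw [hxj, Matrix.trace_mul_cycle, hqq j, Matrix.trace_mul_comm,
        htrE j (q j) f (hqmem j)]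
  have htry : ∀ j, (y j).trace = (f * q j).trace := by
    intro j
    rw [hyj, Matrix.trace_mul_cycle, hqq j, Matrix.trace_mul_comm,
        htrE (j+1) (q j) f (hqmemle (Nat.le_succ j))]
  have htrr : ∀ j, (r j).trace = (f * q j).trace - (f * q (j+1)).trace := by
    intro j
    rw [hrj, Matrix.trace_sub, htry, ← hxy j, htrx]
  -- x j ≤ lam • 1
  have hxle1 : ∀ j, ((lam : ℂ) • (1 : Matrix (Fin m) (Fin m) ℂ) - x j).PosSemidef := by
    intro j
    have h1 : (lam : ℂ) • (1 : Matrix (Fin m) (Fin m) ℂ) - x j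
        = ((lam : ℂ) • q j - x j) + (lam : ℂ) • (1 - q j) := by
      rw [smul_sub]; abel
    rw [h1, hxj]
    exact Matrix.PosSemidef.add (hqlevel j) (czh_psd_smul (hq1psd j) hlam.le)
  -- trace inequalities
  have hxEr : ∀ j, (x j * E j (r j)).trace ≤ (lam : ℂ) * (r j).trace := by
    intro j
    have h := czh_psd_trace_mul_mono (hpos j _ (hrpsd j)) (hxle1 j)
    rw [Matrix.mul_smul, Matrix.mul_one, Matrix.trace_smul, htr,
        Matrix.trace_mul_comm] at h
    simpa [smul_eq_mul] using h
  have hx0r : ∀ j, (x 0 * r j).trace ≤ (lam : ℂ) * (r j).trace := by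
    intro j
    have h := czh_psd_trace_mul_mono (hrpsd j) (hxle1 0)
    rw [Matrix.mul_smul, Matrix.mul_one, Matrix.trace_smul, Matrix.trace_mul_comm] at h
    simpa [smul_eq_mul] using h
  have hxNq : x N * q N = x N := by
    rw [hxj, Matrix.mul_assoc, hqq]
  have hxNsq : (x N * x N).trace ≤ (lam : ℂ) * (f * q N).trace := by
    have hlev : ((lam : ℂ) • q N - x N).PosSemidef := by rw [hxj]; exact hqlevel N
    have h := czh_psd_trace_mul_mono (hxpsd N) hlev
    rw [Matrix.mul_smul, Matrix.trace_smul, hxNq, htrx N] at h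
    simpa [smul_eq_mul] using h
  have hApsd : (q N * f * q N).PosSemidef := hsand _ _ (hqH N) hf
  have hAq : (q N * f * q N) * q N = q N * f * q N := by rw [Matrix.mul_assoc, hqq]
  have htrA : (q N * f * q N).trace = (f * q N).trace := by
    rw [Matrix.trace_mul_cycle, hqq, Matrix.trace_mul_comm]
  have hAsq : ((q N * f * q N) * (q N * f * q N)).trace ≤ (lam : ℂ) * (f * q N).trace := by
    have h := czh_psd_trace_mul_mono hApsd hqf
    rw [Matrix.mul_smul, Matrix.trace_smul, hAq, htrA] at h
    simpa [smul_eq_mul] using h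
  -- pairing identity at level N
  have hpair : ∀ a : Matrix (Fin m) (Fin m) ℂ, E N a = a →
      ((q N * f * q N) * a).trace = (x N * a).trace := by
    intro a ha
    have hmeasq : E N (q N * a * q N) = q N * a * q N := by
      rw [hbimod N (q N) (q N) a (hqmem N) (hqmem N), ha]
    have e1 : ((q N * f * q N) * a).trace = (f * (q N * a * q N)).trace := by
      rw [show (q N * f * q N) * a = q N * (f * (q N * a)) by simp only [Matrix.mul_assoc],
          Matrix.trace_mul_comm,
          show f * (q N * a) * q N = f * (q N * a * q N) by simp only [Matrix.mul_assoc]]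
    have e2 : (x N * a).trace = (E N f * (q N * a * q N)).trace := by
      rw [hxj,
          show (q N * E N f * q N) * a = q N * (E N f * (q N * a)) by
            simp only [Matrix.mul_assoc],
          Matrix.trace_mul_comm,
          show E N f * (q N * a) * q N = E N f * (q N * a * q N) by
            simp only [Matrix.mul_assoc]]
    rw [e1, e2]
    exact (htrE N _ f hmeasq).symm
  -- orthogonality of martingale differences
  have horth : ∀ j (a : Matrix (Fin m) (Fin m) ℂ), E j a = a → (a * b j).trace = 0 := by
    intro j a ha
    rw [hbj, Matrix.mul_sub, Matrix.trace_sub]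
    have h1 : (a * x (j+1)).trace = (a * E j (x (j+1))).trace := by
      rw [← htr j (a * x (j+1)), hleft j a _ ha]
    rw [h1, sub_self]
  have hbmeas : ∀ j, E (j+1) (b j) = b j := by
    intro j
    rw [hbj, map_sub, hxmeas (j+1), hmono (Nat.le_succ j) _ (hidem' j _)]
  have hbmeasle : ∀ {i j : ℕ}, i + 1 ≤ j → E j (b i) = b i :=
    fun {i j} h => hmono h _ (hbmeas i)
  have hbher : ∀ j, (b j)ᴴ = b j := by
    intro j
    rw [hbj, Matrix.conjTranspose_sub, (hxpsd (j+1)).1, (hpos j _ (hxpsd (j+1))).1]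
  -- squared L² norm of the martingale difference
  have hbsq : ∀ j, (b j * b j).trace
      = (x (j+1) * x (j+1)).trace - (E j (x (j+1)) * E j (x (j+1))).trace := by
    intro j
    have h0 : (E j (x (j+1)) * b j).trace = 0 := horth j _ (hidem' j _)
    rw [hbj, Matrix.mul_sub, Matrix.trace_sub] at h0
    have h0' := sub_eq_zero.mp h0
    have h2 : (x (j+1) * E j (x (j+1))).trace
        = (E j (x (j+1)) * E j (x (j+1))).trace := by
      rw [Matrix.trace_mul_comm]; exact h0'
    rw [hbj, Matrix.sub_mul, Matrix.mul_sub, Matrix.mul_sub, Matrix.trace_sub,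
        Matrix.trace_sub, Matrix.trace_sub, h2, h0']
    ring
  have hExsq : ∀ j, (x j * x j).trace - 2 * ((lam : ℂ) * (r j).trace)
      ≤ (E j (x (j+1)) * E j (x (j+1))).trace := by
    intro j
    have hexp : (E j (x (j+1)) * E j (x (j+1))).trace
        = (x j * x j).trace - 2 * (x j * E j (r j)).trace
          + (E j (r j) * E j (r j)).trace := by
      rw [hExs j, Matrix.sub_mul, Matrix.mul_sub, Matrix.mul_sub, Matrix.trace_sub,
          Matrix.trace_sub, Matrix.trace_sub, Matrix.trace_mul_comm (E j (r j)) (x j)]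
      ring
    rw [hexp]
    have h1 := hxEr j
    have h2 := czh_psd_trace_mul_nonneg (hpos j _ (hrpsd j)) (hpos j _ (hrpsd j))
    have h3 : 2 * (x j * E j (r j)).trace ≤ 2 * ((lam : ℂ) * (r j).trace) :=
      mul_le_mul_of_nonneg_left h1 (by norm_num)
    calc (x j * x j).trace - 2 * ((lam : ℂ) * (r j).trace)
        ≤ (x j * x j).trace - 2 * (x j * E j (r j)).trace := sub_le_sub_left h3 _
      _ ≤ (x j * x j).trace - 2 * (x j * E j (r j)).trace
          + (E j (r j) * E j (r j)).trace := le_add_of_nonneg_right h2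
  have hbbound : ∀ j, (b j * b j).trace
      ≤ (x (j+1) * x (j+1)).trace - (x j * x j).trace + 2 * ((lam : ℂ) * (r j).trace) := by
    intro j
    rw [hbsq j]
    have h3 := sub_le_sub_left (hExsq j) ((x (j+1) * x (j+1)).trace)
    have h4 : (x (j+1) * x (j+1)).trace
        - ((x j * x j).trace - 2 * ((lam : ℂ) * (r j).trace))
        = (x (j+1) * x (j+1)).trace - (x j * x j).trace
          + 2 * ((lam : ℂ) * (r j).trace) := by ring
    rw [h4] at h3
    exact h3
  -- summed trace identities
  have hsumr : ∑ j ∈ Finset.range N, (r j).trace = f.trace - (f * q N).trace := by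
    calc ∑ j ∈ Finset.range N, (r j).trace
        = ∑ j ∈ Finset.range N, ((f * q j).trace - (f * q (j+1)).trace) :=
          Finset.sum_congr rfl (fun j _ => htrr j)
      _ = f.trace - (f * q N).trace := by
          rw [Finset.sum_range_sub' (fun j => (f * q j).trace) N, hq0, Matrix.mul_one]
  have hsumb : ∑ j ∈ Finset.range N, (b j * b j).trace
      ≤ (x N * x N).trace - (x 0 * x 0).trace
        + 2 * ((lam : ℂ) * (f.trace - (f * q N).trace)) := by
    calc ∑ j ∈ Finset.range N, (b j * b j).trace
        ≤ ∑ j ∈ Finset.range N, ((x (j+1) * x (j+1)).trace - (x j * x j).trace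
            + 2 * ((lam : ℂ) * (r j).trace)) :=
          Finset.sum_le_sum (fun j _ => hbbound j)
      _ = (∑ j ∈ Finset.range N, ((x (j+1) * x (j+1)).trace - (x j * x j).trace))
          + ∑ j ∈ Finset.range N, 2 * ((lam : ℂ) * (r j).trace) := by
          rw [Finset.sum_add_distrib]
      _ = ((x N * x N).trace - (x 0 * x 0).trace)
          + 2 * ((lam : ℂ) * ∑ j ∈ Finset.range N, (r j).trace) := by
          rw [Finset.sum_range_sub (fun j => (x j * x j).trace) N, ← Finset.mul_sum,
            ← Finset.mul_sum]
      _ = (x N * x N).trace - (x 0 * x 0).trace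
          + 2 * ((lam : ℂ) * (f.trace - (f * q N).trace)) := by rw [hsumr]
  -- the cross-term recursion
  have hx0y : ∀ j, (x 0 * y j).trace = (x 0 * x j).trace := by
    intro j
    rw [← htr j (x 0 * y j), hleft j (x 0) (y j) (hxmeasle (Nat.zero_le j)), hEy]
  have hcross : ∀ n, (x 0 * x n).trace
      = (x 0 * x 0).trace - ∑ j ∈ Finset.range n, (x 0 * r j).trace := by
    intro n
    induction n with
    | zero => simp
    | succ k ih =>
      rw [Finset.sum_range_succ]
      have hstep : (x 0 * x (k+1)).trace = (x 0 * x k).trace - (x 0 * r k).trace := by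
        rw [hxyr k, Matrix.mul_sub, Matrix.trace_sub, hx0y]
      rw [hstep, ih]
      ring
  -- Part 1
  have goal1 : ∀ j : ℕ,
      E j ((q j - q (j + 1)) * f * (q j - q (j + 1)))
        = q j * E j f * q j - E j (q (j + 1) * E (j + 1) f * q (j + 1)) := by
    intro j
    have hexp : (q j - q (j+1)) * f * (q j - q (j+1))
        = q j * f * q j - q (j+1) * f * q j - q j * f * q (j+1)
          + q (j+1) * f * q (j+1) := by
      noncomm_ring
    have h1 : E j (q j * f * q j) = q j * E j f * q j :=
      hbimod j _ _ f (hqmem j) (hqmem j)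
    have hkey1 : q (j+1) * E (j+1) f * q j = x (j+1) := by
      conv_lhs => rw [← heq j]
      rw [show q (j+1) * q j * E (j+1) f * q j = q (j+1) * (q j * E (j+1) f * q j) by
            simp only [Matrix.mul_assoc],
          hqcomm j, ← hyj, ← hxy j]
    have hkey2 : q j * E (j+1) f * q (j+1) = x (j+1) := by
      conv_lhs => rw [← hqe j]
      rw [show q j * E (j+1) f * (q j * q (j+1)) = (q j * E (j+1) f * q j) * q (j+1) by
            simp only [Matrix.mul_assoc],
          ← hyj, ← hxy j]
    have hmix1 : E j (q (j+1) * f * q j) = E j (x (j+1)) := by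
      have hi : E (j+1) (q (j+1) * f * q j) = x (j+1) := by
        rw [hbimod (j+1) _ _ f (hqmem (j+1)) (hqmemle (Nat.le_succ j))]
        exact hkey1
      rw [← htow j (q (j+1) * f * q j), hi]
    have hmix2 : E j (q j * f * q (j+1)) = E j (x (j+1)) := by
      have hi : E (j+1) (q j * f * q (j+1)) = x (j+1) := by
        rw [hbimod (j+1) _ _ f (hqmemle (Nat.le_succ j)) (hqmem (j+1))]
        exact hkey2
      rw [← htow j (q j * f * q (j+1)), hi]
    have hmix3 : E j (q (j+1) * f * q (j+1)) = E j (x (j+1)) := by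
      have hi : E (j+1) (q (j+1) * f * q (j+1)) = x (j+1) := by
        rw [hbimod (j+1) _ _ f (hqmem (j+1)) (hqmem (j+1))]
        exact (hxj (j+1)).symm
      rw [← htow j (q (j+1) * f * q (j+1)), hi]
    rw [hexp, map_add, map_sub, map_sub, h1, hmix1, hmix2, hmix3,
        show q (j+1) * E (j+1) f * q (j+1) = x (j+1) from (hxj (j+1)).symm]
    abel
  -- Part 2, complex-valued bound
  have hfin2 : ((x N - x 0) * (x N - x 0)).trace ≤ (lam : ℂ) * f.trace := by
    have hexp : ((x N - x 0) * (x N - x 0)).trace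
        = (x N * x N).trace - (x 0 * x 0).trace
          + 2 * ∑ j ∈ Finset.range N, (x 0 * r j).trace := by
      rw [Matrix.sub_mul, Matrix.mul_sub, Matrix.mul_sub, Matrix.trace_sub,
          Matrix.trace_sub, Matrix.trace_sub, Matrix.trace_mul_comm (x N) (x 0),
          hcross N]
      ring
    rw [hexp]
    have hs1 : ∑ j ∈ Finset.range N, (x 0 * r j).trace
        ≤ (lam : ℂ) * (f.trace - (f * q N).trace) := by
      calc ∑ j ∈ Finset.range N, (x 0 * r j).trace
          ≤ ∑ j ∈ Finset.range N, (lam : ℂ) * (r j).trace :=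
            Finset.sum_le_sum (fun j _ => hx0r j)
        _ = (lam : ℂ) * ∑ j ∈ Finset.range N, (r j).trace := by rw [← Finset.mul_sum]
        _ = (lam : ℂ) * (f.trace - (f * q N).trace) := by rw [hsumr]
    have hs2 : ∑ j ∈ Finset.range N, (x 0 * r j).trace ≤ (x 0 * x 0).trace := by
      have h2 : ∑ j ∈ Finset.range N, (x 0 * r j).trace
          = (x 0 * x 0).trace - (x 0 * x N).trace := by
        have h := hcross N
        linear_combination h
      rw [h2]
      exact sub_le_self _ (czh_psd_trace_mul_nonneg (hxpsd 0) (hxpsd N))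
    calc (x N * x N).trace - (x 0 * x 0).trace
          + 2 * ∑ j ∈ Finset.range N, (x 0 * r j).trace
        = ((x N * x N).trace - (x 0 * x 0).trace
            + ∑ j ∈ Finset.range N, (x 0 * r j).trace)
          + ∑ j ∈ Finset.range N, (x 0 * r j).trace := by ring
      _ ≤ ((lam : ℂ) * (f * q N).trace - (x 0 * x 0).trace
            + (lam : ℂ) * (f.trace - (f * q N).trace)) + (x 0 * x 0).trace := by
          exact add_le_add (add_le_add (sub_le_sub_right hxNsq _) hs1) hs2
      _ = (lam : ℂ) * f.trace := by ring
  -- Part 3, complex-valued bound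
  have hfqN : (0 : ℂ) ≤ (f * q N).trace := czh_psd_trace_mul_nonneg hf (hqpsd N)
  have hlamC : (0 : ℂ) ≤ (lam : ℂ) := by exact_mod_cast hlam.le
  have hx0sq : (0 : ℂ) ≤ (x 0 * x 0).trace :=
    czh_psd_trace_mul_nonneg (hxpsd 0) (hxpsd 0)
  have hfin3 : ∑ j ∈ Finset.range N, (b j * b j).trace
      ≤ 2 * ((lam : ℂ) * f.trace) := by
    refine le_trans hsumb ?_
    calc (x N * x N).trace - (x 0 * x 0).trace
          + 2 * ((lam : ℂ) * (f.trace - (f * q N).trace))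
        ≤ (lam : ℂ) * (f * q N).trace - (x 0 * x 0).trace
          + 2 * ((lam : ℂ) * (f.trace - (f * q N).trace)) :=
          add_le_add_left (sub_le_sub_right hxNsq _) _
      _ = 2 * ((lam : ℂ) * f.trace)
          - ((lam : ℂ) * (f * q N).trace + (x 0 * x 0).trace) := by ring
      _ ≤ 2 * ((lam : ℂ) * f.trace) :=
          sub_le_self _ (add_nonneg (mul_nonneg hlamC hfqN) hx0sq)
  -- Part 4, complex-valued bound
  have hsum4 : ∑ j ∈ Finset.range N, E j ((q j - q (j + 1)) * f * (q j - q (j + 1)))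
      = (x 0 - x N) + ∑ j ∈ Finset.range N, b j := by
    have hterm : ∀ j, E j ((q j - q (j + 1)) * f * (q j - q (j + 1)))
        = (x j - x (j+1)) + b j := by
      intro j
      rw [goal1 j, hbj,
          show q j * E j f * q j = x j from (hxj j).symm,
          show q (j+1) * E (j+1) f * q (j+1) = x (j+1) from (hxj (j+1)).symm]
      abel
    rw [Finset.sum_congr rfl (fun j _ => hterm j), Finset.sum_add_distrib,
        Finset.sum_range_sub' x N]
  have huB : ∀ j ∈ Finset.range N,
      ((q N * f * q N + (x 0 - x N)) * b j).trace = 0 := by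
    intro j hj
    have hjN : j + 1 ≤ N := Finset.mem_range.mp hj
    rw [Matrix.add_mul, Matrix.sub_mul, Matrix.trace_add, Matrix.trace_sub,
        hpair (b j) (hbmeasle hjN), horth j (x 0) (hxmeasle (Nat.zero_le j))]
    ring
  have hBB : ((∑ j ∈ Finset.range N, b j) * (∑ j ∈ Finset.range N, b j)).trace
      = ∑ j ∈ Finset.range N, (b j * b j).trace := by
    rw [Finset.sum_mul_sum, Matrix.trace_sum]
    have hdiag : ∀ i ∈ Finset.range N,
        (∑ j ∈ Finset.range N, b i * b j).trace = (b i * b i).trace := by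
      intro i hi
      rw [Matrix.trace_sum]
      rw [Finset.sum_eq_single i]
      · intro j hj hne
        rcases lt_or_gt_of_ne hne with h | h
        · rw [Matrix.trace_mul_comm]
          exact horth i (b j) (hbmeasle h)
        · exact horth j (b i) (hbmeasle h)
      · intro h
        exact absurd hi h
    rw [Finset.sum_congr rfl hdiag]
  have hu2 : ((q N * f * q N + (x 0 - x N)) * (q N * f * q N + (x 0 - x N))).trace
      = ((q N * f * q N) * (q N * f * q N)).trace
        + (x 0 * x 0).trace - (x N * x N).trace := by
    have hp0 : ((q N * f * q N) * x 0).trace = (x N * x 0).trace :=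
      hpair (x 0) (hxmeasle (Nat.zero_le N))
    have hpN : ((q N * f * q N) * x N).trace = (x N * x N).trace :=
      hpair (x N) (hxmeas N)
    simp only [Matrix.add_mul, Matrix.mul_add, Matrix.sub_mul, Matrix.mul_sub,
      Matrix.trace_add, Matrix.trace_sub]
    rw [Matrix.trace_mul_comm (x 0) (q N * f * q N),
        Matrix.trace_mul_comm (x N) (q N * f * q N), hp0, hpN,
        Matrix.trace_mul_comm (x N) (x 0)]
    ring
  have hfin4 : (((q N * f * q N + (x 0 - x N)) + ∑ j ∈ Finset.range N, b j)
      * ((q N * f * q N + (x 0 - x N)) + ∑ j ∈ Finset.range N, b j)).trace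
      ≤ 2 * ((lam : ℂ) * f.trace) := by
    rw [Matrix.add_mul (q N * f * q N + (x 0 - x N)) (∑ j ∈ Finset.range N, b j)
          ((q N * f * q N + (x 0 - x N)) + ∑ j ∈ Finset.range N, b j),
        Matrix.mul_add (q N * f * q N + (x 0 - x N)) (q N * f * q N + (x 0 - x N))
          (∑ j ∈ Finset.range N, b j),
        Matrix.mul_add (∑ j ∈ Finset.range N, b j) (q N * f * q N + (x 0 - x N))
          (∑ j ∈ Finset.range N, b j),
        Matrix.trace_add, Matrix.trace_add, Matrix.trace_add]
    have hc1 : ((q N * f * q N + (x 0 - x N)) * ∑ j ∈ Finset.range N, b j).trace = 0 := by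
      rw [Finset.mul_sum, Matrix.trace_sum]
      exact Finset.sum_eq_zero huB
    have hc2 : ((∑ j ∈ Finset.range N, b j) * (q N * f * q N + (x 0 - x N))).trace = 0 :=
      (Matrix.trace_mul_comm _ _).trans hc1
    rw [hc1, hc2, hu2, hBB]
    have hstep : ((q N * f * q N) * (q N * f * q N)).trace + (x 0 * x 0).trace
        - (x N * x N).trace + 0 + (0 + ∑ j ∈ Finset.range N, (b j * b j).trace)
        ≤ ((lam : ℂ) * (f * q N).trace + (x 0 * x 0).trace - (x N * x N).trace)
          + ((x N * x N).trace - (x 0 * x 0).trace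
            + 2 * ((lam : ℂ) * (f.trace - (f * q N).trace))) := by
      have e1 : ((q N * f * q N) * (q N * f * q N)).trace + (x 0 * x 0).trace
          - (x N * x N).trace + 0 + (0 + ∑ j ∈ Finset.range N, (b j * b j).trace)
          = (((q N * f * q N) * (q N * f * q N)).trace + (x 0 * x 0).trace
            - (x N * x N).trace) + ∑ j ∈ Finset.range N, (b j * b j).trace := by ring
      rw [e1]
      exact add_le_add (sub_le_sub_right (add_le_add_left hAsq _) _) hsumb
    refine le_trans hstep ?_
    calc ((lam : ℂ) * (f * q N).trace + (x 0 * x 0).trace - (x N * x N).trace)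
          + ((x N * x N).trace - (x 0 * x 0).trace
            + 2 * ((lam : ℂ) * (f.trace - (f * q N).trace)))
        = 2 * ((lam : ℂ) * f.trace) - (lam : ℂ) * (f * q N).trace := by ring
      _ ≤ 2 * ((lam : ℂ) * f.trace) := sub_le_self _ (mul_nonneg hlamC hfqN)
  -- convert to real statements
  have htn : traceNorm f = f.trace.re := by
    unfold traceNorm
    rw [czh_sqrt_eq f hf]
  have hfre : 0 ≤ f.trace.re := (Complex.le_def.mp (czh_psd_trace_nonneg hf)).1
  have hermNM : (x N - x 0)ᴴ = x N - x 0 := by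
    rw [Matrix.conjTranspose_sub, (hxpsd N).1, (hxpsd 0).1]
  -- goal 2
  have goal2 : frobSq (∑ j ∈ Finset.range N, (x (j+1) - x j)) ≤ lam * traceNorm f := by
    rw [Finset.sum_range_sub x N]
    have h : frobSq (x N - x 0) = (((x N - x 0) * (x N - x 0)).trace).re := by
      unfold frobSq
      rw [hermNM]
    rw [h, htn]
    have h2 := (Complex.le_def.mp hfin2).1
    rwa [Complex.re_ofReal_mul] at h2
  -- goal 3
  have goal3 : (∑ j ∈ Finset.range N, frobSq (x (j+1) - E j (x (j+1))))
      ≤ 2 * lam * traceNorm f := by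
    have h : ∀ j, frobSq (x (j+1) - E j (x (j+1))) = ((b j * b j).trace).re := by
      intro j
      unfold frobSq
      rw [← hbj, hbher]
    rw [Finset.sum_congr rfl (fun j _ => h j), ← Complex.re_sum, htn]
    have h2 := (Complex.le_def.mp hfin3).1
    have e : (2 * ((lam : ℂ) * f.trace)).re = 2 * lam * f.trace.re := by
      rw [show (2 : ℂ) * ((lam : ℂ) * f.trace) = ((2 * lam : ℝ) : ℂ) * f.trace by
            push_cast; ring,
          Complex.re_ofReal_mul]
    rw [e] at h2
    exact h2
  -- goal 4
  have goal4 : frobSq (q N * f * q N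
      + ∑ j ∈ Finset.range N, E j ((q j - q (j + 1)) * f * (q j - q (j + 1))))
      ≤ 6 * lam * traceNorm f := by
    have hMeq : q N * f * q N
        + ∑ j ∈ Finset.range N, E j ((q j - q (j + 1)) * f * (q j - q (j + 1)))
        = (q N * f * q N + (x 0 - x N)) + ∑ j ∈ Finset.range N, b j := by
      rw [hsum4]
      abel
    have hherm : ((q N * f * q N + (x 0 - x N)) + ∑ j ∈ Finset.range N, b j)ᴴ
        = (q N * f * q N + (x 0 - x N)) + ∑ j ∈ Finset.range N, b j := by
      rw [Matrix.conjTranspose_add, Matrix.conjTranspose_add, Matrix.conjTranspose_sub,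
          hApsd.1, (hxpsd 0).1, (hxpsd N).1, Matrix.conjTranspose_sum]
      congr 1
      exact Finset.sum_congr rfl (fun j _ => hbher j)
    rw [hMeq]
    have h : frobSq ((q N * f * q N + (x 0 - x N)) + ∑ j ∈ Finset.range N, b j)
        = ((((q N * f * q N + (x 0 - x N)) + ∑ j ∈ Finset.range N, b j)
          * ((q N * f * q N + (x 0 - x N)) + ∑ j ∈ Finset.range N, b j)).trace).re := by
      unfold frobSq
      rw [hherm]
    rw [h, htn]
    have h2 := (Complex.le_def.mp hfin4).1
    have e : (2 * ((lam : ℂ) * f.trace)).re = 2 * lam * f.trace.re := by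
      rw [show (2 : ℂ) * ((lam : ℂ) * f.trace) = ((2 * lam : ℝ) : ℂ) * f.trace by
            push_cast; ring,
          Complex.re_ofReal_mul]
    rw [e] at h2
    refine le_trans h2 ?_
    nlinarith [hlam.le, hfre]
  refine ⟨goal1, ?_, ?_, goal4⟩
  · have h := goal2
    simp only [hxd] at h
    exact h
  · have h := goal3
    simp only [hxd] at h
    exact h
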